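/- Fix N ≥ 4 and any set of fewer than ⌊N/2⌋ sample points x_1 ≤ ... ≤ x_k in [0,1]. Then there exist two distinct Cantor CDFs F_B and F_C, both with scale factor N, such that F_B(x_n) = F_C(x_n) for all n. Hence no set of fewer than ⌊N/2⌋ points is a set of uniqueness for scale factor N. -/

import Mathlib

open MeasureTheory Set Filter
open scoped ENNReal

namespace CantorAux

noncomputable def bit (i : ℕ) (y : ℝ) : ℤ := ⌊y * 2 ^ (i + 1)⌋ % 2

lemma bit01 (i : ℕ) (y : ℝ) : bit i y = 0 ∨ bit i y = 1 := Int.emod_two_eq_zero_or_one _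

lemma bit_nonneg (i : ℕ) (y : ℝ) : (0:ℝ) ≤ (bit i y : ℝ) := by
  rcases bit01 i y with h | h <;> simp [h]

lemma bit_le_one (i : ℕ) (y : ℝ) : ((bit i y : ℝ)) ≤ 1 := by
  rcases bit01 i y with h | h <;> simp [h]

noncomputable def dig (a b : ℕ) (i : ℕ) (y : ℝ) : ℝ := a + ((b:ℝ) - a) * (bit i y)

lemma dig_ge {a b : ℕ} (hab : a ≤ b) (i : ℕ) (y : ℝ) : (a:ℝ) ≤ dig a b i y := by
  have h1 := bit_nonneg i y
  have h2 : (0:ℝ) ≤ (b:ℝ) - a := by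
    have : (a:ℝ) ≤ b := by exact_mod_cast hab
    linarith
  have := mul_nonneg h2 h1
  simp only [dig]; linarith

lemma dig_nonneg {a b : ℕ} (hab : a ≤ b) (i : ℕ) (y : ℝ) : 0 ≤ dig a b i y :=
  le_trans (by positivity) (dig_ge hab i y)

lemma dig_le {a b : ℕ} (hab : a ≤ b) (i : ℕ) (y : ℝ) : dig a b i y ≤ b := by
  have h1 := bit_le_one i y
  have h2 : (0:ℝ) ≤ (b:ℝ) - a := by
    have : (a:ℝ) ≤ b := by exact_mod_cast hab
    linarith
  have := mul_le_of_le_one_right h2 h1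
  simp only [dig]; linarith

noncomputable def Phi (N a b : ℕ) (y : ℝ) : ℝ := ∑' i, dig a b i y / N ^ (i + 1)

lemma div_pow_eq {N : ℕ} (hN : 2 ≤ N) (c : ℝ) :
    (fun i : ℕ => c / (N:ℝ) ^ (i+1)) = fun i : ℕ => (c / N) * ((N:ℝ)⁻¹) ^ i := by
  funext i
  have hN0 : (N:ℝ) ≠ 0 := by positivity
  rw [pow_succ']
  field_simp
  rw [one_div, inv_pow, mul_assoc, mul_inv_cancel₀ (pow_ne_zero _ hN0), mul_one]

lemma summable_div_pow {N : ℕ} (hN : 2 ≤ N) (c : ℝ) :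
    Summable (fun i : ℕ => c / (N:ℝ) ^ (i+1)) := by
  rw [div_pow_eq hN c]
  have h1 : (0:ℝ) ≤ (N:ℝ)⁻¹ := by positivity
  have h2 : ((N:ℝ))⁻¹ < 1 := by
    rw [inv_lt_one_iff₀]
    right; exact_mod_cast lt_of_lt_of_le one_lt_two (by exact_mod_cast hN)
  exact (summable_geometric_of_lt_one h1 h2).mul_left _

lemma tsum_div_pow {N : ℕ} (hN : 2 ≤ N) (c : ℝ) :
    ∑' i : ℕ, c / (N:ℝ) ^ (i+1) = c / ((N:ℝ) - 1) := by
  have hN0 : (N:ℝ) ≠ 0 := by positivity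
  have hN1 : (N:ℝ) - 1 ≠ 0 := by
    have : (2:ℝ) ≤ N := by exact_mod_cast hN
    intro h; nlinarith
  have h1 : (0:ℝ) ≤ (N:ℝ)⁻¹ := by positivity
  have h2 : ((N:ℝ))⁻¹ < 1 := by
    rw [inv_lt_one_iff₀]
    right; exact_mod_cast lt_of_lt_of_le one_lt_two (by exact_mod_cast hN)
  rw [div_pow_eq hN c, tsum_mul_left, tsum_geometric_of_lt_one h1 h2]
  field_simp

lemma summable_phi {N a b : ℕ} (hN : 2 ≤ N) (hab : a ≤ b) (y : ℝ) :
    Summable (fun i : ℕ => dig a b i y / (N:ℝ) ^ (i+1)) := by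
  apply Summable.of_nonneg_of_le (fun i => by
      have := dig_nonneg hab i y; positivity)
    (fun i => by
      have hp : (0:ℝ) < (N:ℝ) ^ (i+1) := by positivity
      exact (div_le_div_iff_of_pos_right hp).mpr (dig_le hab i y))
    (summable_div_pow hN (b:ℝ))


lemma Phi_ge {N a b : ℕ} (hN : 2 ≤ N) (hab : a ≤ b) (y : ℝ) :
    (a:ℝ) / ((N:ℝ) - 1) ≤ Phi N a b y := by
  rw [Phi, ← tsum_div_pow hN (a:ℝ)]
  refine Summable.tsum_le_tsum (fun i => ?_) (summable_div_pow hN (a:ℝ)) (summable_phi hN hab y)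
  have hp : (0:ℝ) < (N:ℝ) ^ (i+1) := by positivity
  exact (div_le_div_iff_of_pos_right hp).mpr (dig_ge hab i y)

lemma Phi_le {N a b : ℕ} (hN : 2 ≤ N) (hab : a ≤ b) (y : ℝ) :
    Phi N a b y ≤ (b:ℝ) / ((N:ℝ) - 1) := by
  rw [Phi, ← tsum_div_pow hN (b:ℝ)]
  refine Summable.tsum_le_tsum (fun i => ?_) (summable_phi hN hab y) (summable_div_pow hN (b:ℝ))
  have hp : (0:ℝ) < (N:ℝ) ^ (i+1) := by positivity
  exact (div_le_div_iff_of_pos_right hp).mpr (dig_le hab i y)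

lemma Phi_nonneg {N a b : ℕ} (hN : 2 ≤ N) (hab : a ≤ b) (y : ℝ) : 0 ≤ Phi N a b y := by
  refine le_trans ?_ (Phi_ge hN hab y)
  have h1 : (0:ℝ) ≤ (N:ℝ) - 1 := by
    have : (2:ℝ) ≤ N := by exact_mod_cast hN
    linarith
  positivity

lemma bit_succ_lo (i : ℕ) (y : ℝ) : bit (i+1) y = bit i (2 * y) := by
  have h : y * 2 ^ (i+1+1) = (2*y) * 2 ^ (i+1) := by ring
  rw [bit, bit, h]

lemma bit_succ_hi (i : ℕ) (y : ℝ) : bit (i+1) y = bit i (2 * y - 1) := by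
  have h : (2*y - 1) * 2 ^ (i+1) = y * 2 ^ (i+1+1) + (-(2^(i+1)) : ℤ) := by
    push_cast; ring
  rw [bit, bit, h, Int.floor_add_intCast]
  have h2 : (2:ℤ) ∣ 2 ^ (i+1) := dvd_pow_self 2 (Nat.succ_ne_zero i)
  omega

lemma bit_zero_lo {y : ℝ} (hy : 0 ≤ y) (hy2 : y < 1/2) : bit 0 y = 0 := by
  have : ⌊y * 2 ^ (0+1)⌋ = 0 := by
    rw [Int.floor_eq_zero_iff]
    constructor <;> simp <;> nlinarith
  rw [bit, this]; rfl

lemma bit_zero_hi {y : ℝ} (hy : 1/2 ≤ y) (hy2 : y < 1) : bit 0 y = 1 := by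
  have : ⌊y * 2 ^ (0+1)⌋ = 1 := by
    rw [Int.floor_eq_iff]
    constructor <;> push_cast <;> nlinarith
  rw [bit, this]; rfl

lemma Phi_rec_lo {N a b : ℕ} (hN : 2 ≤ N) (hab : a ≤ b) {y : ℝ} (hy : 0 ≤ y) (hy2 : y < 1/2) :
    Phi N a b y = ((a:ℝ) + Phi N a b (2*y)) / N := by
  have hN0 : (N:ℝ) ≠ 0 := by positivity
  have hs := summable_phi hN hab (N := N) y
  rw [Phi, hs.tsum_eq_zero_add]
  have h0 : dig a b 0 y / (N:ℝ) ^ (0+1) = (a:ℝ) / N := by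
    rw [dig, bit_zero_lo hy hy2]; push_cast; ring_nf
  have ht : ∀ i : ℕ, dig a b (i+1) y / (N:ℝ) ^ (i+1+1)
      = (dig a b i (2*y) / (N:ℝ) ^ (i+1)) * (N:ℝ)⁻¹ := by
    intro i
    rw [dig, dig, bit_succ_lo, pow_succ, ← div_div, div_eq_mul_inv]
  rw [tsum_congr ht, tsum_mul_right, h0, Phi]
  field_simp

lemma Phi_rec_hi {N a b : ℕ} (hN : 2 ≤ N) (hab : a ≤ b) {y : ℝ} (hy : 1/2 ≤ y) (hy2 : y < 1) :
    Phi N a b y = ((b:ℝ) + Phi N a b (2*y - 1)) / N := by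
  have hN0 : (N:ℝ) ≠ 0 := by positivity
  have hs := summable_phi hN hab (N := N) y
  rw [Phi, hs.tsum_eq_zero_add]
  have h0 : dig a b 0 y / (N:ℝ) ^ (0+1) = (b:ℝ) / N := by
    rw [dig, bit_zero_hi hy hy2]; push_cast; ring_nf
  have ht : ∀ i : ℕ, dig a b (i+1) y / (N:ℝ) ^ (i+1+1)
      = (dig a b i (2*y - 1) / (N:ℝ) ^ (i+1)) * (N:ℝ)⁻¹ := by
    intro i
    rw [dig, dig, bit_succ_hi, pow_succ, ← div_div, div_eq_mul_inv]
  rw [tsum_congr ht, tsum_mul_right, h0, Phi]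
  field_simp

lemma Phi_gt_min {N a b : ℕ} (hN : 2 ≤ N) (hab : a < b) {y : ℝ} (hy : 0 < y) (hy2 : y < 1) :
    (a:ℝ) / ((N:ℝ) - 1) < Phi N a b y := by
  have hbit : ∃ i, bit i y = 1 := by
    by_contra hcon
    push_neg at hcon
    have h0 : ∀ i, bit i y = 0 := fun i => (bit01 i y).resolve_right (hcon i)
    have key : ∀ n : ℕ, y * 2 ^ (n+1) < 1 := by
      intro n
      induction n with
      | zero =>
        have hb := h0 0
        rw [bit] at hb
        have hfl : ⌊y * 2 ^ (0+1)⌋ = 0 ∨ ⌊y * 2 ^ (0+1)⌋ = 1 := by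
          have h1 : (0:ℝ) ≤ y * 2 ^ (0+1) := by positivity
          have h2 : y * 2 ^ (0+1) < 2 := by norm_num; nlinarith
          have := Int.floor_nonneg.mpr h1
          have h3 : ⌊y * 2 ^ (0+1)⌋ < 2 := by
            have := Int.floor_le (y * 2 ^ (0+1))
            exact_mod_cast Int.floor_lt.mpr (by push_cast; linarith)
          omega
        have : ⌊y * 2 ^ (0+1)⌋ = 0 := by omega
        have := Int.floor_eq_zero_iff.mp this
        simpa using (this.2)
      | succ n ih =>
        have hb := h0 (n+1)
        rw [bit] at hb
        have h1 : (0:ℝ) ≤ y * 2 ^ (n+1+1) := by positivity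
        have h2 : y * 2 ^ (n+1+1) < 2 := by
          have : y * 2 ^ (n+1+1) = (y * 2 ^ (n+1)) * 2 := by ring
          rw [this]; linarith
        have hfl0 : (0:ℤ) ≤ ⌊y * 2 ^ (n+1+1)⌋ := Int.floor_nonneg.mpr h1
        have hfl2 : ⌊y * 2 ^ (n+1+1)⌋ < 2 := Int.floor_lt.mpr (by push_cast; linarith)
        have : ⌊y * 2 ^ (n+1+1)⌋ = 0 := by omega
        have := Int.floor_eq_zero_iff.mp this
        simpa using this.2
    obtain ⟨n, hn⟩ := exists_pow_lt_of_lt_one hy (by norm_num : (1:ℝ)/2 < 1)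
    have h2n : ((1:ℝ)/2) ^ n = 1 / 2 ^ n := by
      rw [div_pow]; norm_num
    have : (1:ℝ) < y * 2 ^ n := by
      rw [h2n] at hn
      have hp : (0:ℝ) < 2 ^ n := by positivity
      rw [div_lt_iff₀ hp] at hn
      linarith
    have hk := key n
    have : y * 2 ^ (n+1) = (y * 2 ^ n) * 2 := by ring
    nlinarith [key n]
  obtain ⟨i, hi⟩ := hbit
  have hextra : Summable (fun j : ℕ => ((b:ℝ) - a) * (bit j y : ℝ) / (N:ℝ) ^ (j+1)) := by
    apply Summable.of_nonneg_of_le (fun j => by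
        have h1 := bit_nonneg j y
        have h2 : (0:ℝ) ≤ (b:ℝ) - a := by
          have : (a:ℝ) ≤ b := by exact_mod_cast hab.le
          linarith
        positivity)
      (fun j => ?_) (summable_div_pow hN ((b:ℝ) - a))
    have hp : (0:ℝ) < (N:ℝ) ^ (j+1) := by positivity
    refine (div_le_div_iff_of_pos_right hp).mpr ?_
    have h1 := bit_le_one j y
    have h2 : (0:ℝ) ≤ (b:ℝ) - a := by
      have : (a:ℝ) ≤ b := by exact_mod_cast hab.le
      linarith
    nlinarith
  have hsplit : Phi N a b y
      = (a:ℝ) / ((N:ℝ) - 1) + ∑' j : ℕ, ((b:ℝ) - a) * (bit j y : ℝ) / (N:ℝ) ^ (j+1) := by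
    rw [Phi, ← tsum_div_pow hN (a:ℝ), ← Summable.tsum_add (summable_div_pow hN (a:ℝ)) hextra]
    refine tsum_congr (fun j => ?_)
    rw [dig, ← add_div]
  have hterm : ((b:ℝ) - a) * (bit i y : ℝ) / (N:ℝ) ^ (i+1)
      ≤ ∑' j : ℕ, ((b:ℝ) - a) * (bit j y : ℝ) / (N:ℝ) ^ (j+1) := by
    refine Summable.le_tsum hextra i (fun j _ => ?_)
    have h1 := bit_nonneg j y
    have h2 : (0:ℝ) ≤ (b:ℝ) - a := by
      have : (a:ℝ) ≤ b := by exact_mod_cast hab.le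
      linarith
    positivity
  have hpos : 0 < ((b:ℝ) - a) * (bit i y : ℝ) / (N:ℝ) ^ (i+1) := by
    rw [hi]
    have h2 : (0:ℝ) < (b:ℝ) - a := by
      have : (a:ℝ) < b := by exact_mod_cast hab
      linarith
    push_cast
    positivity
  linarith

lemma measurable_phi {N a b : ℕ} (hN : 2 ≤ N) (hab : a ≤ b) : Measurable (Phi N a b) := by
  apply measurable_of_tendsto_metrizable
    (f := fun n (y : ℝ) => ∑ i ∈ Finset.range n, dig a b i y / (N:ℝ) ^ (i+1))
  · intro n
    apply Finset.measurable_sum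
    intro i _
    apply Measurable.div_const
    have hfl : Measurable (fun y : ℝ => ⌊y * 2 ^ (i+1)⌋) := by
      have hmono : Monotone (fun y : ℝ => ⌊y * 2 ^ (i+1)⌋) := by
        intro u v huv
        exact Int.floor_le_floor (by nlinarith [pow_pos (by norm_num : (0:ℝ) < 2) (i+1)])
      exact hmono.measurable
    have hb : Measurable (fun y : ℝ => (bit i y : ℝ)) := by
      exact (measurable_from_top (f := fun z : ℤ => ((z % 2 : ℤ) : ℝ))).comp hfl
    unfold dig
    exact measurable_const.add (hb.const_mul _)
  · rw [tendsto_pi_nhds]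
    intro y
    exact (summable_phi hN hab y).hasSum.tendsto_sum_nat


noncomputable def mu (N a b : ℕ) : Measure ℝ := (volume.restrict (Ico (0:ℝ) 1)).map (Phi N a b)

lemma restrict_prob : IsProbabilityMeasure (volume.restrict (Ico (0:ℝ) 1)) := by
  constructor
  rw [Measure.restrict_apply_univ, Real.volume_Ico]
  norm_num

lemma mu_prob {N a b : ℕ} (hN : 2 ≤ N) (hab : a ≤ b) : IsProbabilityMeasure (mu N a b) := by
  have := restrict_prob
  exact Measure.isProbabilityMeasure_map (measurable_phi hN hab).aemeasurable

lemma mu_apply {N a b : ℕ} (hN : 2 ≤ N) (hab : a ≤ b) {s : Set ℝ} (hs : MeasurableSet s) :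
    mu N a b s = volume (Phi N a b ⁻¹' s ∩ Ico (0:ℝ) 1) := by
  rw [mu, Measure.map_apply (measurable_phi hN hab) hs,
    Measure.restrict_apply ((measurable_phi hN hab) hs)]

lemma NR_pos {N : ℕ} (hN : 2 ≤ N) : (0:ℝ) < (N:ℝ) - 1 := by
  have : (2:ℝ) ≤ N := by exact_mod_cast hN
  linarith

lemma mu_Icc01 {N a b : ℕ} (hN : 2 ≤ N) (hab : a ≤ b) (hbN : (b:ℝ) ≤ (N:ℝ) - 1) :
    mu N a b (Icc (0:ℝ) 1) = 1 := by
  rw [mu_apply hN hab measurableSet_Icc]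
  have hset : Phi N a b ⁻¹' (Icc (0:ℝ) 1) ∩ Ico (0:ℝ) 1 = Ico (0:ℝ) 1 := by
    apply inter_eq_self_of_subset_right
    intro y _
    refine ⟨Phi_nonneg hN hab y, ?_⟩
    refine le_trans (Phi_le hN hab y) ?_
    rw [div_le_one (NR_pos hN)]
    exact hbN
  rw [hset, Real.volume_Ico]
  norm_num

lemma mu_cdf_zero {N a b : ℕ} (hN : 2 ≤ N) (hab : a < b) {x : ℝ}
    (hx : x ≤ (a:ℝ) / ((N:ℝ) - 1)) : mu N a b (Icc (0:ℝ) x) = 0 := by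
  rw [mu_apply hN hab.le measurableSet_Icc]
  refine measure_mono_null (t := {(0:ℝ)}) ?_ Real.volume_singleton
  rintro y ⟨hy1, hy2⟩
  simp only [mem_singleton_iff]
  by_contra hy0
  have hypos : 0 < y := lt_of_le_of_ne hy2.1 (by simpa [eq_comm] using hy0)
  have hgt := Phi_gt_min hN hab hypos hy2.2
  have h2 : Phi N a b y ≤ x := hy1.2
  linarith

lemma mu_cdf_one {N a b : ℕ} (hN : 2 ≤ N) (hab : a ≤ b) {x : ℝ}
    (hx : (b:ℝ) / ((N:ℝ) - 1) ≤ x) : mu N a b (Icc (0:ℝ) x) = 1 := by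
  rw [mu_apply hN hab measurableSet_Icc]
  have hset : Phi N a b ⁻¹' (Icc (0:ℝ) x) ∩ Ico (0:ℝ) 1 = Ico (0:ℝ) 1 := by
    apply inter_eq_self_of_subset_right
    intro y _
    exact ⟨Phi_nonneg hN hab y, le_trans (Phi_le hN hab y) hx⟩
  rw [hset, Real.volume_Ico]
  norm_num

lemma mu_cdf_half {N a b : ℕ} (hN : 2 ≤ N) (hab : a < b) {x : ℝ}
    (h1 : ((a:ℝ) + (b:ℝ) / ((N:ℝ) - 1)) / N ≤ x)
    (h2 : x ≤ ((b:ℝ) + (a:ℝ) / ((N:ℝ) - 1)) / N) :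
    mu N a b (Icc (0:ℝ) x) = ENNReal.ofReal (1/2) := by
  have hN0 : (0:ℝ) < (N:ℝ) := by positivity
  rw [mu_apply hN hab.le measurableSet_Icc]
  have hlow : Ico (0:ℝ) (1/2) ⊆ Phi N a b ⁻¹' (Icc (0:ℝ) x) ∩ Ico (0:ℝ) 1 := by
    rintro y ⟨hy1, hy2⟩
    refine ⟨⟨Phi_nonneg hN hab.le y, ?_⟩, ⟨hy1, by linarith⟩⟩
    rw [Phi_rec_lo hN hab.le hy1 hy2]
    refine le_trans ?_ h1
    have hle := Phi_le hN hab.le (N := N) (a := a) (b := b) (2*y)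
    gcongr
  have hhigh : Phi N a b ⁻¹' (Icc (0:ℝ) x) ∩ Ico (0:ℝ) 1 ⊆ Icc (0:ℝ) (1/2) := by
    rintro y ⟨hy1, hy2⟩
    refine ⟨hy2.1, ?_⟩
    by_contra hc
    push_neg at hc
    have hrec := Phi_rec_hi hN hab.le (le_of_lt hc) hy2.2
    have hgt : ((b:ℝ) + (a:ℝ) / ((N:ℝ) - 1)) / N < Phi N a b y := by
      rw [hrec]
      have hmin := Phi_gt_min hN hab (y := 2*y - 1) (by linarith) (by linarith [hy2.2])
      gcongr
    have h2 : Phi N a b y ≤ x := hy1.2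
    linarith
  have hvol1 : volume (Ico (0:ℝ) (1/2)) = ENNReal.ofReal (1/2) := by
    rw [Real.volume_Ico]; norm_num
  have hvol2 : volume (Icc (0:ℝ) (1/2)) = ENNReal.ofReal (1/2) := by
    rw [Real.volume_Icc]; norm_num
  refine le_antisymm ?_ ?_
  · exact le_trans (measure_mono hhigh) (le_of_eq hvol2)
  · exact le_trans (le_of_eq hvol1.symm) (measure_mono hlow)


lemma map_half_lo : (volume.restrict (Ico (0:ℝ) (1/2))).map (fun y : ℝ => 2 * y)
    = (2 : ℝ≥0∞)⁻¹ • volume.restrict (Ico (0:ℝ) 1) := by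
  have hdbl : Measurable (fun y : ℝ => 2 * y) := (measurable_id.const_mul 2)
  have hpre : (fun y : ℝ => 2 * y) ⁻¹' (Ico (0:ℝ) 1) = Ico (0:ℝ) (1/2) := by
    ext y
    simp only [mem_preimage, mem_Ico]
    constructor <;> intro h <;> exact ⟨by linarith [h.1], by linarith [h.2]⟩
  rw [← hpre, ← Measure.restrict_map hdbl measurableSet_Ico,
    Real.map_volume_mul_left (two_ne_zero), Measure.restrict_smul]
  congr 1
  rw [abs_of_pos (by norm_num : (0:ℝ) < 2⁻¹), ENNReal.ofReal_inv_of_pos (by norm_num : (0:ℝ) < 2)]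
  norm_num

lemma map_half_hi : (volume.restrict (Ico (1/2 : ℝ) 1)).map (fun y : ℝ => 2 * y - 1)
    = (2 : ℝ≥0∞)⁻¹ • volume.restrict (Ico (0:ℝ) 1) := by
  have hg : Measurable (fun y : ℝ => 2 * y - 1) := (measurable_id.const_mul 2).sub measurable_const
  have hpre : (fun y : ℝ => 2 * y - 1) ⁻¹' (Ico (0:ℝ) 1) = Ico (1/2 : ℝ) 1 := by
    ext y
    simp only [mem_preimage, mem_Ico]
    constructor <;> intro h <;> exact ⟨by linarith [h.1], by linarith [h.2]⟩
  have hmap : Measure.map (fun y : ℝ => 2 * y - 1) volume = (2 : ℝ≥0∞)⁻¹ • volume := by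
    have hcomp : (fun y : ℝ => 2 * y - 1) = (fun z : ℝ => z + (-1)) ∘ (fun y : ℝ => 2 * y) := by
      funext y; simp; ring
    have hm1 : Measurable (fun z : ℝ => z + (-1:ℝ)) := measurable_id.add_const _
    have hm2 : Measurable (fun y : ℝ => 2 * y) := measurable_id.const_mul 2
    rw [hcomp, ← Measure.map_map hm1 hm2,
      Real.map_volume_mul_left (two_ne_zero), Measure.map_smul, map_add_right_eq_self]
    congr 1
    rw [abs_of_pos (by norm_num : (0:ℝ) < 2⁻¹), ENNReal.ofReal_inv_of_pos (by norm_num : (0:ℝ) < 2)]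
    norm_num
  rw [← hpre, ← Measure.restrict_map hg measurableSet_Ico, hmap, Measure.restrict_smul]

lemma mu_invariant {N a b : ℕ} (hN : 2 ≤ N) (hab : a ≤ b) :
    mu N a b = (2 : ℝ≥0∞)⁻¹ • ((mu N a b).map (fun t : ℝ => (t + (a:ℝ)) / N))
      + (2 : ℝ≥0∞)⁻¹ • ((mu N a b).map (fun t : ℝ => (t + (b:ℝ)) / N)) := by
  have hN0 : (N:ℝ) ≠ 0 := by positivity
  have hPhi := measurable_phi hN hab (N := N)
  have hfa : Measurable (fun t : ℝ => (t + (a:ℝ)) / N) := (measurable_id.add_const _).div_const _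
  have hfb : Measurable (fun t : ℝ => (t + (b:ℝ)) / N) := (measurable_id.add_const _).div_const _
  have hdbl : Measurable (fun y : ℝ => 2 * y) := measurable_id.const_mul 2
  have hg : Measurable (fun y : ℝ => 2 * y - 1) := (measurable_id.const_mul 2).sub measurable_const
  have hsplit : volume.restrict (Ico (0:ℝ) 1)
      = volume.restrict (Ico (0:ℝ) (1/2)) + volume.restrict (Ico (1/2:ℝ) 1) := by
    rw [← Measure.restrict_union (Ico_disjoint_Ico_same) measurableSet_Ico,
      Ico_union_Ico_eq_Ico (by norm_num) (by norm_num)]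
  have hlo : (volume.restrict (Ico (0:ℝ) (1/2))).map (Phi N a b)
      = (2 : ℝ≥0∞)⁻¹ • ((mu N a b).map (fun t : ℝ => (t + (a:ℝ)) / N)) := by
    have hae : Phi N a b =ᶠ[ae (volume.restrict (Ico (0:ℝ) (1/2)))]
        ((fun t : ℝ => (t + (a:ℝ)) / N) ∘ Phi N a b ∘ (fun y : ℝ => 2 * y)) := by
      rw [Filter.EventuallyEq, ae_restrict_iff' measurableSet_Ico]
      filter_upwards with y hy
      rcases hy with ⟨h1, h2⟩
      simp only [Function.comp_apply]
      rw [Phi_rec_lo hN hab h1 h2]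
      ring
    rw [Measure.map_congr hae]
    have hcomp : ((fun t : ℝ => (t + (a:ℝ)) / N) ∘ Phi N a b ∘ (fun y : ℝ => 2 * y))
        = ((fun t : ℝ => (t + (a:ℝ)) / N) ∘ Phi N a b) ∘ (fun y : ℝ => 2 * y) := rfl
    rw [hcomp, ← Measure.map_map (hfa.comp hPhi) hdbl, map_half_lo, Measure.map_smul,
      ← Measure.map_map hfa hPhi]
    rfl
  have hhi : (volume.restrict (Ico (1/2:ℝ) 1)).map (Phi N a b)
      = (2 : ℝ≥0∞)⁻¹ • ((mu N a b).map (fun t : ℝ => (t + (b:ℝ)) / N)) := by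
    have hae : Phi N a b =ᶠ[ae (volume.restrict (Ico (1/2:ℝ) 1))]
        ((fun t : ℝ => (t + (b:ℝ)) / N) ∘ Phi N a b ∘ (fun y : ℝ => 2 * y - 1)) := by
      rw [Filter.EventuallyEq, ae_restrict_iff' measurableSet_Ico]
      filter_upwards with y hy
      rcases hy with ⟨h1, h2⟩
      simp only [Function.comp_apply]
      rw [Phi_rec_hi hN hab h1 h2]
      ring
    rw [Measure.map_congr hae]
    have hcomp : ((fun t : ℝ => (t + (b:ℝ)) / N) ∘ Phi N a b ∘ (fun y : ℝ => 2 * y - 1))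
        = ((fun t : ℝ => (t + (b:ℝ)) / N) ∘ Phi N a b) ∘ (fun y : ℝ => 2 * y - 1) := rfl
    rw [hcomp, ← Measure.map_map (hfb.comp hPhi) hg, map_half_hi, Measure.map_smul,
      ← Measure.map_map hfb hPhi]
    rfl
  calc mu N a b = (volume.restrict (Ico (0:ℝ) 1)).map (Phi N a b) := rfl
    _ = (volume.restrict (Ico (0:ℝ) (1/2)) + volume.restrict (Ico (1/2:ℝ) 1)).map (Phi N a b) := by
        rw [← hsplit]
    _ = (volume.restrict (Ico (0:ℝ) (1/2))).map (Phi N a b)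
        + (volume.restrict (Ico (1/2:ℝ) 1)).map (Phi N a b) := Measure.map_add _ _ hPhi
    _ = _ := by rw [hlo, hhi]


lemma plat_le_grid {N : ℕ} (hN : 2 ≤ N) {A B C : ℝ} (h : A * ((N:ℝ)-1) + B ≤ C * N) :
    (A + B/((N:ℝ)-1))/N ≤ C/((N:ℝ)-1) := by
  have h1 := NR_pos hN
  have h2 : (0:ℝ) < (N:ℝ) := by positivity
  rw [div_le_div_iff₀ h2 h1]
  have hexp : (A + B/((N:ℝ)-1)) * ((N:ℝ)-1) = A*((N:ℝ)-1) + B := by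
    field_simp
  rw [hexp]; exact h

lemma grid_le_plat {N : ℕ} (hN : 2 ≤ N) {A B C : ℝ} (h : C * N ≤ A * ((N:ℝ)-1) + B) :
    C/((N:ℝ)-1) ≤ (A + B/((N:ℝ)-1))/N := by
  have h1 := NR_pos hN
  have h2 : (0:ℝ) < (N:ℝ) := by positivity
  rw [div_le_div_iff₀ h1 h2]
  have hexp : (A + B/((N:ℝ)-1)) * ((N:ℝ)-1) = A*((N:ℝ)-1) + B := by
    field_simp
  nlinarith [hexp]

lemma assemble (N : ℕ) (hN : 4 ≤ N) (k : ℕ) (x : Fin k → ℝ)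
    (a b a' b' : ℕ)
    (hab : a < b) (hbN : b ≤ N - 1) (hab' : a' < b') (hb'N : b' ≤ N - 1)
    (t : ℝ) (ht : t ∈ Icc (0:ℝ) 1)
    (hdiff : (mu N a b (Icc 0 t)).toReal ≠ (mu N a' b' (Icc 0 t)).toReal)
    (hmatch : ∀ n, mu N a b (Icc 0 (x n)) = mu N a' b' (Icc 0 (x n))) :
    ∃ (D E : Finset ℕ) (μ ν : Measure ℝ),
      D ⊆ Finset.range N ∧ 2 ≤ D.card ∧ D.card ≤ N - 1 ∧
      E ⊆ Finset.range N ∧ 2 ≤ E.card ∧ E.card ≤ N - 1 ∧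
      IsProbabilityMeasure μ ∧ IsProbabilityMeasure ν ∧
      μ (Set.Icc 0 1) = 1 ∧ ν (Set.Icc 0 1) = 1 ∧
      μ = (D.card : ℝ≥0∞)⁻¹ • ∑ d ∈ D, μ.map (fun s : ℝ => (s + (d : ℝ)) / N) ∧
      ν = (E.card : ℝ≥0∞)⁻¹ • ∑ d ∈ E, ν.map (fun s : ℝ => (s + (d : ℝ)) / N) ∧
      (∃ t ∈ Set.Icc (0:ℝ) 1,
        (μ (Set.Icc 0 t)).toReal ≠ (ν (Set.Icc 0 t)).toReal) ∧
      (∀ n, (μ (Set.Icc 0 (x n))).toReal = (ν (Set.Icc 0 (x n))).toReal) := by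
  have hN2 : 2 ≤ N := by omega
  have hbNR : (b:ℝ) ≤ (N:ℝ) - 1 := by
    have : b + 1 ≤ N := by omega
    have : (b:ℝ) + 1 ≤ N := by exact_mod_cast this
    linarith
  have hb'NR : (b':ℝ) ≤ (N:ℝ) - 1 := by
    have : b' + 1 ≤ N := by omega
    have : (b':ℝ) + 1 ≤ N := by exact_mod_cast this
    linarith
  have hcardD : ({a, b} : Finset ℕ).card = 2 := Finset.card_pair hab.ne
  have hcardE : ({a', b'} : Finset ℕ).card = 2 := Finset.card_pair hab'.ne
  refine ⟨{a, b}, {a', b'}, mu N a b, mu N a' b', ?_, ?_, ?_, ?_, ?_, ?_,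
      mu_prob hN2 hab.le, mu_prob hN2 hab'.le,
      mu_Icc01 hN2 hab.le hbNR, mu_Icc01 hN2 hab'.le hb'NR, ?_, ?_,
      ⟨t, ht, hdiff⟩, fun n => by rw [hmatch n]⟩
  · intro d hd
    rw [Finset.mem_insert, Finset.mem_singleton] at hd
    rw [Finset.mem_range]
    rcases hd with h | h <;> omega
  · rw [hcardD]
  · rw [hcardD]; omega
  · intro d hd
    rw [Finset.mem_insert, Finset.mem_singleton] at hd
    rw [Finset.mem_range]
    rcases hd with h | h <;> omega
  · rw [hcardE]
  · rw [hcardE]; omega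
  · rw [hcardD, Finset.sum_pair hab.ne, smul_add]
    exact_mod_cast mu_invariant hN2 hab.le
  · rw [hcardE, Finset.sum_pair hab'.ne, smul_add]
    exact_mod_cast mu_invariant hN2 hab'.le

end CantorAux


open CantorAux in
set_option maxHeartbeats 2000000 in
theorem no_uniqueness_with_fewer_than_half_samples
    (N : ℕ) (hN : 4 ≤ N)
    (k : ℕ) (hk : k < N / 2)
    (x : Fin k → ℝ) (hx : ∀ n, x n ∈ Set.Icc (0:ℝ) 1)
    (hmono : ∀ m n : Fin k, m ≤ n → x m ≤ x n) :
    ∃ (D E : Finset ℕ) (μ ν : Measure ℝ),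
      D ⊆ Finset.range N ∧ 2 ≤ D.card ∧ D.card ≤ N - 1 ∧
      E ⊆ Finset.range N ∧ 2 ≤ E.card ∧ E.card ≤ N - 1 ∧
      IsProbabilityMeasure μ ∧ IsProbabilityMeasure ν ∧
      μ (Set.Icc 0 1) = 1 ∧ ν (Set.Icc 0 1) = 1 ∧
      μ = (D.card : ℝ≥0∞)⁻¹ • ∑ d ∈ D, μ.map (fun t : ℝ => (t + (d : ℝ)) / N) ∧
      ν = (E.card : ℝ≥0∞)⁻¹ • ∑ d ∈ E, ν.map (fun t : ℝ => (t + (d : ℝ)) / N) ∧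
      (∃ t ∈ Set.Icc (0:ℝ) 1,
        (μ (Set.Icc 0 t)).toReal ≠ (ν (Set.Icc 0 t)).toReal) ∧
      (∀ n, (μ (Set.Icc 0 (x n))).toReal = (ν (Set.Icc 0 (x n))).toReal) := by
  classical
  have hN2 : 2 ≤ N := by omega
  have hNR := NR_pos hN2
  have hN0 : (0:ℝ) < (N:ℝ) := by positivity
  have hN4R : (4:ℝ) ≤ (N:ℝ) := by exact_mod_cast hN
  by_cases hcase : ∃ e : ℕ, e + 2 ≤ N - 1 ∧
      ∀ n, x n ∉ Ioo ((e:ℝ)/((N:ℝ)-1)) (((e:ℝ)+2)/((N:ℝ)-1))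
  · -- Case 1 : a free double window
    obtain ⟨e, he, hfree⟩ := hcase
    have he3 : e + 3 ≤ N := by omega
    have heR : (e:ℝ) + 3 ≤ (N:ℝ) := by exact_mod_cast he3
    refine assemble N hN k x e (e+1) e (e+2) (by omega) (by omega) (by omega) (by omega)
      (((e:ℝ)+1)/((N:ℝ)-1)) ⟨by positivity, ?_⟩ ?_ ?_
    · rw [div_le_one hNR]; linarith
    · -- distinctness
      have hv1 : mu N e (e+1) (Icc 0 (((e:ℝ)+1)/((N:ℝ)-1))) = 1 :=
        mu_cdf_one hN2 (by omega) (by push_cast; exact le_rfl)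
      have hv2 : mu N e (e+2) (Icc 0 (((e:ℝ)+1)/((N:ℝ)-1))) = ENNReal.ofReal (1/2) := by
        refine mu_cdf_half hN2 (by omega) ?_ ?_
        · push_cast
          exact plat_le_grid hN2 (by linarith)
        · push_cast
          exact grid_le_plat hN2 (by linarith)
      rw [hv1, hv2, ENNReal.toReal_ofReal (by norm_num)]
      norm_num
    · -- matching
      intro n
      have hnot := hfree n
      rw [mem_Ioo] at hnot
      push_neg at hnot
      rcases le_or_gt (x n) ((e:ℝ)/((N:ℝ)-1)) with h | h
      · rw [mu_cdf_zero hN2 (by omega) h, mu_cdf_zero hN2 (by omega) h]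
      · have hge := hnot h
        have hstep : ((e:ℝ)+1)/((N:ℝ)-1) ≤ ((e:ℝ)+2)/((N:ℝ)-1) :=
          (div_le_div_iff_of_pos_right hNR).mpr (by linarith)
        rw [mu_cdf_one hN2 (by omega) (by push_cast; linarith),
          mu_cdf_one hN2 (by omega) (by push_cast; linarith)]
  · -- Case 2 : every double window is pierced
    push_neg at hcase
    have hcov : ∀ i : Fin ((N-1)/2), ∃ n,
        x n ∈ Ioo (((2*i.1:ℕ):ℝ)/((N:ℝ)-1)) ((((2*i.1:ℕ):ℝ)+2)/((N:ℝ)-1)) := by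
      intro i
      have hi := i.isLt
      exact hcase (2*i.1) (by omega)
    set σ : Fin ((N-1)/2) → Fin k := fun i => (hcov i).choose with hσdef
    have hσ : ∀ i, x (σ i) ∈ Ioo (((2*i.1:ℕ):ℝ)/((N:ℝ)-1)) ((((2*i.1:ℕ):ℝ)+2)/((N:ℝ)-1)) :=
      fun i => (hcov i).choose_spec
    have hinj : Function.Injective σ := by
      intro i j hij
      by_contra hne
      have hne' : i.1 ≠ j.1 := fun h => hne (Fin.ext h)
      rcases Nat.lt_or_ge i.1 j.1 with h | h
      · have hcast : ((2*i.1:ℕ):ℝ) + 2 ≤ ((2*j.1:ℕ):ℝ) := by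
          push_cast
          have : i.1 + 1 ≤ j.1 := h
          have : (i.1:ℝ) + 1 ≤ (j.1:ℝ) := by exact_mod_cast this
          linarith
        have hu := (hσ i).2
        have hl := (hσ j).1
        rw [hij] at hu
        have hmid : (((2*i.1:ℕ):ℝ)+2)/((N:ℝ)-1) ≤ ((2*j.1:ℕ):ℝ)/((N:ℝ)-1) := by
          exact (div_le_div_iff_of_pos_right hNR).mpr hcast
        linarith
      · have hlt : j.1 < i.1 := by omega
        have hcast : ((2*j.1:ℕ):ℝ) + 2 ≤ ((2*i.1:ℕ):ℝ) := by
          push_cast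
          have : (j.1:ℝ) + 1 ≤ (i.1:ℝ) := by exact_mod_cast hlt
          linarith
        have hu := (hσ j).2
        have hl := (hσ i).1
        rw [hij] at hl
        have hmid : (((2*j.1:ℕ):ℝ)+2)/((N:ℝ)-1) ≤ ((2*i.1:ℕ):ℝ)/((N:ℝ)-1) := by
          exact (div_le_div_iff_of_pos_right hNR).mpr hcast
        linarith
    have hcard : (N-1)/2 ≤ k := by
      have := Fintype.card_le_of_injective σ hinj
      simpa using this
    obtain ⟨Q, hQ⟩ : ∃ Q, N = 2*Q + 4 := ⟨(N-4)/2, by omega⟩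
    have hbij : Function.Bijective σ :=
      (Fintype.bijective_iff_injective_and_card σ).mpr ⟨hinj, by simp; omega⟩
    have histar : Q < (N-1)/2 := by omega
    set istar : Fin ((N-1)/2) := ⟨Q, histar⟩ with histar_def
    set p := x (σ istar) with hp_def
    have hpL : 2*(Q:ℝ)/((N:ℝ)-1) < p := by
      have h := (hσ istar).1
      push_cast at h
      exact h
    have hpU : p < (2*(Q:ℝ)+2)/((N:ℝ)-1) := by
      have h := (hσ istar).2
      push_cast at h
      exact h
    have hQR : (N:ℝ) = 2*(Q:ℝ) + 4 := by exact_mod_cast hQ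
    have hq0 : (0:ℝ) ≤ (Q:ℝ) := Nat.cast_nonneg Q
    have hother : ∀ n, n ≠ σ istar → x n < 2*(Q:ℝ)/((N:ℝ)-1) := by
      intro n hn
      obtain ⟨i, hi⟩ := hbij.2 n
      have hlt : i.1 < Q := by
        rcases Nat.lt_or_ge i.1 Q with h | h
        · exact h
        · exfalso
          have hiQ : i.1 = Q := by have := i.isLt; omega
          have : i = istar := Fin.ext hiQ
          rw [this] at hi
          exact hn hi.symm
      have hu := (hσ i).2
      rw [hi] at hu
      have hle : (((2*i.1:ℕ):ℝ)+2)/((N:ℝ)-1) ≤ 2*(Q:ℝ)/((N:ℝ)-1) := by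
        apply (div_le_div_iff_of_pos_right hNR).mpr
        push_cast
        have : (i.1:ℝ) + 1 ≤ (Q:ℝ) := by exact_mod_cast hlt
        linarith
      linarith
    -- three subcases according to the position of p
    rcases le_or_gt p ((2*(Q:ℝ)+1)/((N:ℝ)-1)) with hsub1 | hsub1
    · -- (i) p ≤ g(2Q+1) : D = {2Q+1, 2Q+2}, E = {2Q+1, 2Q+3}
      refine assemble N hN k x (2*Q+1) (2*Q+2) (2*Q+1) (2*Q+3)
        (by omega) (by omega) (by omega) (by omega)
        ((2*(Q:ℝ)+2)/((N:ℝ)-1)) ⟨by positivity, ?_⟩ ?_ ?_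
      · rw [div_le_one hNR]; linarith [hQR]
      · have hv1 : mu N (2*Q+1) (2*Q+2) (Icc 0 ((2*(Q:ℝ)+2)/((N:ℝ)-1))) = 1 :=
          mu_cdf_one hN2 (by omega) (by push_cast; exact le_rfl)
        have hv2 : mu N (2*Q+1) (2*Q+3) (Icc 0 ((2*(Q:ℝ)+2)/((N:ℝ)-1)))
            = ENNReal.ofReal (1/2) := by
          refine mu_cdf_half hN2 (by omega) ?_ ?_
          · push_cast
            exact plat_le_grid hN2 (by linarith)
          · push_cast
            exact grid_le_plat hN2 (by linarith)
        rw [hv1, hv2, ENNReal.toReal_ofReal (by norm_num)]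
        norm_num
      · intro n
        by_cases hn : n = σ istar
        · have hxn : x n ≤ ((2*Q+1:ℕ):ℝ)/((N:ℝ)-1) := by
            rw [hn, ← hp_def]; push_cast; linarith
          rw [mu_cdf_zero hN2 (by omega) hxn, mu_cdf_zero hN2 (by omega) hxn]
        · have hxn : x n ≤ ((2*Q+1:ℕ):ℝ)/((N:ℝ)-1) := by
            have := hother n hn
            push_cast
            have hstep : 2*(Q:ℝ)/((N:ℝ)-1) ≤ (2*(Q:ℝ)+1)/((N:ℝ)-1) := by
              apply (div_le_div_iff_of_pos_right hNR).mpr; linarith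
            linarith
          rw [mu_cdf_zero hN2 (by omega) hxn, mu_cdf_zero hN2 (by omega) hxn]
    · rcases le_or_gt ((2*(Q:ℝ)+1 + (2*(Q:ℝ)+3)/((N:ℝ)-1))/(N:ℝ)) p with hsub2 | hsub2
      · -- (ii) p in plateau : D = {2Q+1, 2Q+3}, E = {2Q, 2Q+3}
        refine assemble N hN k x (2*Q+1) (2*Q+3) (2*Q) (2*Q+3)
          (by omega) (by omega) (by omega) (by omega)
          ((2*(Q:ℝ)+1)/((N:ℝ)-1)) ⟨by positivity, ?_⟩ ?_ ?_
        · rw [div_le_one hNR]; linarith [hQR]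
        · have hv1 : mu N (2*Q+1) (2*Q+3) (Icc 0 ((2*(Q:ℝ)+1)/((N:ℝ)-1))) = 0 :=
            mu_cdf_zero hN2 (by omega) (by push_cast; exact le_rfl)
          have hv2 : mu N (2*Q) (2*Q+3) (Icc 0 ((2*(Q:ℝ)+1)/((N:ℝ)-1)))
              = ENNReal.ofReal (1/2) := by
            refine mu_cdf_half hN2 (by omega) ?_ ?_
            · push_cast
              exact plat_le_grid hN2 (by linarith)
            · push_cast
              exact grid_le_plat hN2 (by linarith)
          rw [hv1, hv2, ENNReal.toReal_ofReal (by norm_num)]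
          norm_num
        · intro n
          by_cases hn : n = σ istar
          · -- x n = p : both plateaus give 1/2
            have hxp : x n = p := by rw [hn, ← hp_def]
            have hD : mu N (2*Q+1) (2*Q+3) (Icc 0 (x n)) = ENNReal.ofReal (1/2) := by
              refine mu_cdf_half hN2 (by omega) ?_ ?_
              · rw [hxp]; push_cast; exact hsub2
              · rw [hxp]
                push_cast
                have hub : (2*(Q:ℝ)+2)/((N:ℝ)-1)
                    ≤ (2*(Q:ℝ)+3 + (2*(Q:ℝ)+1)/((N:ℝ)-1))/(N:ℝ) :=
                  grid_le_plat hN2 (by linarith)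
                linarith
            have hE : mu N (2*Q) (2*Q+3) (Icc 0 (x n)) = ENNReal.ofReal (1/2) := by
              refine mu_cdf_half hN2 (by omega) ?_ ?_
              · rw [hxp]
                push_cast
                have hlo : (2*(Q:ℝ) + (2*(Q:ℝ)+3)/((N:ℝ)-1))/(N:ℝ)
                    ≤ (2*(Q:ℝ)+1 + (2*(Q:ℝ)+3)/((N:ℝ)-1))/(N:ℝ) :=
                  (div_le_div_iff_of_pos_right hN0).mpr (by linarith)
                linarith
              · rw [hxp]
                push_cast
                have hub : (2*(Q:ℝ)+2)/((N:ℝ)-1)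
                    ≤ (2*(Q:ℝ)+3 + 2*(Q:ℝ)/((N:ℝ)-1))/(N:ℝ) :=
                  grid_le_plat hN2 (by linarith)
                linarith
            rw [hD, hE]
          · have hlt := hother n hn
            have hD : mu N (2*Q+1) (2*Q+3) (Icc 0 (x n)) = 0 := by
              refine mu_cdf_zero hN2 (by omega) ?_
              push_cast
              have hstep : 2*(Q:ℝ)/((N:ℝ)-1) ≤ (2*(Q:ℝ)+1)/((N:ℝ)-1) := by
                apply (div_le_div_iff_of_pos_right hNR).mpr; linarith
              linarith
            have hE : mu N (2*Q) (2*Q+3) (Icc 0 (x n)) = 0 := by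
              refine mu_cdf_zero hN2 (by omega) ?_
              push_cast
              linarith
            rw [hD, hE]
      · -- (iii) p just right of g(2Q+1) : D = {2Q, 2Q+2}, E = {2Q, 2Q+3}
        refine assemble N hN k x (2*Q) (2*Q+2) (2*Q) (2*Q+3)
          (by omega) (by omega) (by omega) (by omega)
          ((2*(Q:ℝ)+2)/((N:ℝ)-1)) ⟨by positivity, ?_⟩ ?_ ?_
        · rw [div_le_one hNR]; linarith [hQR]
        · have hv1 : mu N (2*Q) (2*Q+2) (Icc 0 ((2*(Q:ℝ)+2)/((N:ℝ)-1))) = 1 :=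
            mu_cdf_one hN2 (by omega) (by push_cast; exact le_rfl)
          have hv2 : mu N (2*Q) (2*Q+3) (Icc 0 ((2*(Q:ℝ)+2)/((N:ℝ)-1)))
              = ENNReal.ofReal (1/2) := by
            refine mu_cdf_half hN2 (by omega) ?_ ?_
            · push_cast
              exact plat_le_grid hN2 (by linarith)
            · push_cast
              exact grid_le_plat hN2 (by linarith)
          rw [hv1, hv2, ENNReal.toReal_ofReal (by norm_num)]
          norm_num
        · intro n
          by_cases hn : n = σ istar
          · have hxp : x n = p := by rw [hn, ← hp_def]
            have hD : mu N (2*Q) (2*Q+2) (Icc 0 (x n)) = ENNReal.ofReal (1/2) := by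
              refine mu_cdf_half hN2 (by omega) ?_ ?_
              · rw [hxp]
                push_cast
                have hlo : (2*(Q:ℝ) + (2*(Q:ℝ)+2)/((N:ℝ)-1))/(N:ℝ)
                    ≤ (2*(Q:ℝ)+1)/((N:ℝ)-1) :=
                  plat_le_grid hN2 (by linarith)
                linarith
              · rw [hxp]
                push_cast
                have hnum : (2*(Q:ℝ)+3)/((N:ℝ)-1) ≤ 2*(Q:ℝ)/((N:ℝ)-1) + 1 := by
                  rw [show (2*(Q:ℝ)+3) = 2*(Q:ℝ) + 3 by ring, add_div]
                  have h31 : (3:ℝ)/((N:ℝ)-1) ≤ 1 := by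
                    rw [div_le_one hNR]; linarith
                  linarith
                have hub : (2*(Q:ℝ)+1 + (2*(Q:ℝ)+3)/((N:ℝ)-1))/(N:ℝ)
                    ≤ (2*(Q:ℝ)+2 + 2*(Q:ℝ)/((N:ℝ)-1))/(N:ℝ) :=
                  (div_le_div_iff_of_pos_right hN0).mpr (by linarith)
                linarith
            have hE : mu N (2*Q) (2*Q+3) (Icc 0 (x n)) = ENNReal.ofReal (1/2) := by
              refine mu_cdf_half hN2 (by omega) ?_ ?_
              · rw [hxp]
                push_cast
                have hlo : (2*(Q:ℝ) + (2*(Q:ℝ)+3)/((N:ℝ)-1))/(N:ℝ)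
                    ≤ (2*(Q:ℝ)+1)/((N:ℝ)-1) :=
                  plat_le_grid hN2 (by linarith)
                linarith
              · rw [hxp]
                push_cast
                have hnum : (2*(Q:ℝ)+3)/((N:ℝ)-1) ≤ 2*(Q:ℝ)/((N:ℝ)-1) + 2 := by
                  rw [show (2*(Q:ℝ)+3) = 2*(Q:ℝ) + 3 by ring, add_div]
                  have h31 : (3:ℝ)/((N:ℝ)-1) ≤ 2 := by
                    rw [div_le_iff₀ hNR]; linarith
                  linarith
                have hub : (2*(Q:ℝ)+1 + (2*(Q:ℝ)+3)/((N:ℝ)-1))/(N:ℝ)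
                    ≤ (2*(Q:ℝ)+3 + 2*(Q:ℝ)/((N:ℝ)-1))/(N:ℝ) :=
                  (div_le_div_iff_of_pos_right hN0).mpr (by linarith)
                linarith
            rw [hD, hE]
          · have hlt := hother n hn
            have hD : mu N (2*Q) (2*Q+2) (Icc 0 (x n)) = 0 := by
              refine mu_cdf_zero hN2 (by omega) ?_
              push_cast
              linarith
            have hE : mu N (2*Q) (2*Q+3) (Icc 0 (x n)) = 0 := by
              refine mu_cdf_zero hN2 (by omega) ?_
              push_cast
              linarith
            rw [hD, hE]
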